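/- Let Z be a countable type, w : Z → ℝ a weight function with w(z) > 0 for all z, and R > 0 a real number such that Σ_{z∈Z} exp(−w(z)·R) = 1. Define p(z) := exp(−w(z)·R). Then p is a probability mass function on Z, its entropy satisfies the identity H(p) := Σ_{z∈Z} −p(z)·ln(p(z)) = R · Σ_{z∈Z} p(z)·w(z) (as an identity in [0,∞]), and if moreover Σ_{z∈Z} p(z)·w(z) < ∞, then the entropy rate of the process Z₁, Z₂, … of independent, identically distributed random variables with common PMF p equals R, i.e., limsup_{k→∞} H(Z₁,…,Z_k) / E[w(Z₁)+⋯+w(Z_k)] = R. -/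

import Mathlib

open scoped ENNReal
open Filter

lemma tsum_pi_prod_aux {Z : Type*} [Countable Z] (q : Z → ℝ≥0∞) (n : ℕ) :
    ∑' f : Fin n → Z, ∏ i, q (f i) = (∑' z : Z, q z) ^ n := by
  induction n with
  | zero =>
    simp [tsum_eq_single (fun (i : Fin 0) => (i.elim0 : Z))
      (fun f hf => absurd (funext fun i => i.elim0) (Ne.symm hf))]
  | succ n ih =>
    rw [← (Fin.consEquiv (fun _ : Fin (n + 1) => Z)).tsum_eq]
    have h1 : ∀ (x : Z × (Fin n → Z)), (∏ i, q ((Fin.consEquiv (fun _ : Fin (n + 1) => Z)) x i))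
        = q x.1 * ∏ i, q (x.2 i) := by
      rintro ⟨a, f⟩
      simp [Fin.consEquiv, Fin.prod_univ_succ]
    calc ∑' x : Z × (Fin n → Z), ∏ i, q ((Fin.consEquiv (fun _ : Fin (n + 1) => Z)) x i)
        = ∑' x : Z × (Fin n → Z), q x.1 * ∏ i, q (x.2 i) := tsum_congr h1
      _ = ∑' (a : Z), ∑' (f : Fin n → Z), q a * ∏ i, q (f i) :=
          ENNReal.tsum_prod (f := fun a (f : Fin n → Z) => q a * ∏ i, q (f i))
      _ = ∑' (a : Z), q a * ∑' (f : Fin n → Z), ∏ i, q (f i) :=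
          tsum_congr fun a => ENNReal.tsum_mul_left
      _ = (∑' z : Z, q z) ^ (n + 1) := by
          rw [ih, ENNReal.tsum_mul_right, pow_succ, mul_comm]

lemma tsum_pi_sum_prod_aux {Z : Type*} [Countable Z] (q r : Z → ℝ≥0∞)
    (hq : ∑' z : Z, q z = 1) (n : ℕ) :
    ∑' f : Fin n → Z, (∑ i, r (f i)) * ∏ i, q (f i) = n * ∑' z : Z, r z * q z := by
  induction n with
  | zero =>
    simp [tsum_eq_single (fun (i : Fin 0) => (i.elim0 : Z))
      (fun f hf => absurd (funext fun i => i.elim0) (Ne.symm hf))]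
  | succ n ih =>
    rw [← (Fin.consEquiv (fun _ : Fin (n + 1) => Z)).tsum_eq]
    have h1 : ∀ (x : Z × (Fin n → Z)),
        ((∑ i, r ((Fin.consEquiv (fun _ : Fin (n + 1) => Z)) x i)) *
          ∏ i, q ((Fin.consEquiv (fun _ : Fin (n + 1) => Z)) x i))
        = r x.1 * q x.1 * ∏ i, q (x.2 i) + q x.1 * ((∑ i, r (x.2 i)) * ∏ i, q (x.2 i)) := by
      rintro ⟨a, f⟩
      simp only [Fin.consEquiv, Equiv.coe_fn_mk, Fin.prod_univ_succ, Fin.sum_univ_succ,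
        Fin.cons_zero, Fin.cons_succ]
      ring
    calc ∑' x : Z × (Fin n → Z), ((∑ i, r ((Fin.consEquiv (fun _ : Fin (n + 1) => Z)) x i)) *
          ∏ i, q ((Fin.consEquiv (fun _ : Fin (n + 1) => Z)) x i))
        = ∑' x : Z × (Fin n → Z),
            (r x.1 * q x.1 * ∏ i, q (x.2 i) + q x.1 * ((∑ i, r (x.2 i)) * ∏ i, q (x.2 i))) :=
          tsum_congr h1
      _ = (∑' x : Z × (Fin n → Z), r x.1 * q x.1 * ∏ i, q (x.2 i)) +
          ∑' x : Z × (Fin n → Z), q x.1 * ((∑ i, r (x.2 i)) * ∏ i, q (x.2 i)) := ENNReal.tsum_add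
      _ = (∑' a : Z, ∑' f : Fin n → Z, r a * q a * ∏ i, q (f i)) +
          ∑' a : Z, ∑' f : Fin n → Z, q a * ((∑ i, r (f i)) * ∏ i, q (f i)) := by
          rw [ENNReal.tsum_prod (f := fun a (f : Fin n → Z) => r a * q a * ∏ i, q (f i)),
            ENNReal.tsum_prod (f := fun a (f : Fin n → Z) =>
              q a * ((∑ i, r (f i)) * ∏ i, q (f i)))]
      _ = (∑' a : Z, r a * q a * ∑' f : Fin n → Z, ∏ i, q (f i)) +
          ∑' a : Z, q a * ∑' f : Fin n → Z, ((∑ i, r (f i)) * ∏ i, q (f i)) := by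
          congr 1
          · exact tsum_congr fun a => ENNReal.tsum_mul_left
          · exact tsum_congr fun a => ENNReal.tsum_mul_left
      _ = (n + 1 : ℕ) * ∑' z : Z, r z * q z := by
          rw [tsum_pi_prod_aux q n, hq, one_pow, ih, ENNReal.tsum_mul_right,
            ENNReal.tsum_mul_right, hq]
          push_cast
          ring

/-- **Proposition 2 of the paper** (maxentropic PMF, after Krause): if `R > 0` solves
`G_Z(R) = ∑_z exp(-w(z)·R) = 1`, then `p(z) = exp(-w(z)·R)` is a PMF on `Z`, its entropy
satisfies `H(p) = R·∑_z p(z)·w(z)` (as an identity in `[0,∞]`), and if the expected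
weight is finite then the IID process with common PMF `p` has entropy rate `R`. -/
theorem maxentropic_pmf
    {Z : Type*} [Countable Z]
    (w : Z → ℝ) (hw : ∀ z, 0 < w z)
    (R : ℝ) (hR : 0 < R)
    (hsum : ∑' z : Z, ENNReal.ofReal (Real.exp (-w z * R)) = 1)
    (p : Z → ℝ) (hp : ∀ z, p z = Real.exp (-w z * R)) :
    ((∀ z, 0 ≤ p z) ∧ ∑' z : Z, ENNReal.ofReal (p z) = 1) ∧
    (∑' z : Z, ENNReal.ofReal (-(p z * Real.log (p z))) =
      ENNReal.ofReal R * ∑' z : Z, ENNReal.ofReal (p z * w z)) ∧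
    ((∑' z : Z, ENNReal.ofReal (p z * w z)) ≠ ⊤ →
      limsup (fun k : ℕ =>
        (∑' zv : Fin (k + 1) → Z,
          -((∏ i, p (zv i)) * Real.log (∏ i, p (zv i)))) /
        (∑' zv : Fin (k + 1) → Z,
          (∏ i, p (zv i)) * ∑ i, w (zv i))) atTop = R) := by
  have hppos : ∀ z, 0 < p z := fun z => (hp z) ▸ Real.exp_pos _
  have hpnonneg : ∀ z, 0 ≤ p z := fun z => (hppos z).le
  have hlog : ∀ z, Real.log (p z) = -w z * R := fun z => by
    rw [hp z, Real.log_exp]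
  have hptsum : ∑' z : Z, ENNReal.ofReal (p z) = 1 := by
    rw [← hsum]; exact tsum_congr fun z => by rw [hp z]
  -- entropy identity
  have hent : ∀ z, -(p z * Real.log (p z)) = (p z * w z) * R := fun z => by
    rw [hlog z]; ring
  have hEntId : ∑' z : Z, ENNReal.ofReal (-(p z * Real.log (p z))) =
      ENNReal.ofReal R * ∑' z : Z, ENNReal.ofReal (p z * w z) := by
    calc ∑' z : Z, ENNReal.ofReal (-(p z * Real.log (p z)))
        = ∑' z : Z, ENNReal.ofReal (p z * w z) * ENNReal.ofReal R := by
          refine tsum_congr fun z => ?_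
          rw [hent z, ENNReal.ofReal_mul (mul_nonneg (hpnonneg z) (hw z).le)]
      _ = ENNReal.ofReal R * ∑' z : Z, ENNReal.ofReal (p z * w z) := by
          rw [ENNReal.tsum_mul_right, mul_comm]
  refine ⟨⟨hpnonneg, hptsum⟩, hEntId, ?_⟩
  intro hfin
  -- Z is nonempty
  have hZ : Nonempty Z := by
    by_contra h
    rw [not_nonempty_iff] at h
    rw [tsum_empty] at hsum
    exact zero_ne_one hsum
  obtain ⟨z₀⟩ := hZ
  have hEpos : 0 < ∑' z : Z, ENNReal.ofReal (p z * w z) := by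
    refine lt_of_lt_of_le ?_ (ENNReal.le_tsum z₀)
    rw [ENNReal.ofReal_pos]
    exact mul_pos (hppos z₀) (hw z₀)
  -- for each k, the ratio equals R
  have hconst : ∀ k : ℕ,
      (∑' zv : Fin (k + 1) → Z, -((∏ i, p (zv i)) * Real.log (∏ i, p (zv i)))) /
      (∑' zv : Fin (k + 1) → Z, (∏ i, p (zv i)) * ∑ i, w (zv i)) = R := by
    intro k
    set g : (Fin (k + 1) → Z) → ℝ := fun zv => (∏ i, p (zv i)) * ∑ i, w (zv i) with hg
    have hgnonneg : ∀ zv, 0 ≤ g zv := by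
      intro zv
      apply mul_nonneg
      · exact Finset.prod_nonneg fun i _ => hpnonneg _
      · exact Finset.sum_nonneg fun i _ => (hw _).le
    -- ENNReal value of the denominator
    have hofReal : ∀ zv : Fin (k + 1) → Z,
        ENNReal.ofReal (g zv) =
          (∑ i, ENNReal.ofReal (w (zv i))) * ∏ i, ENNReal.ofReal (p (zv i)) := by
      intro zv
      rw [hg]
      rw [ENNReal.ofReal_mul (Finset.prod_nonneg fun i _ => hpnonneg _),
        ENNReal.ofReal_prod_of_nonneg fun i _ => hpnonneg _,
        ENNReal.ofReal_sum_of_nonneg fun i _ => (hw _).le, mul_comm]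
    have hrq : ∀ z : Z, ENNReal.ofReal (w z) * ENNReal.ofReal (p z)
        = ENNReal.ofReal (p z * w z) := fun z => by
      rw [← ENNReal.ofReal_mul (hw z).le, mul_comm]
    have hDenn : ∑' zv : Fin (k + 1) → Z, ENNReal.ofReal (g zv)
        = (k + 1 : ℕ) * ∑' z : Z, ENNReal.ofReal (p z * w z) := by
      rw [tsum_congr hofReal,
        tsum_pi_sum_prod_aux (fun z => ENNReal.ofReal (p z))
          (fun z => ENNReal.ofReal (w z)) hptsum (k + 1),
        tsum_congr hrq]
    have hDfin : ∑' zv : Fin (k + 1) → Z, ENNReal.ofReal (g zv) ≠ ⊤ := by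
      rw [hDenn]
      exact ENNReal.mul_ne_top (ENNReal.natCast_ne_top _) hfin
    have hgsum : Summable g := by
      have := ENNReal.summable_toReal hDfin
      refine this.congr fun zv => ?_
      rw [ENNReal.toReal_ofReal (hgnonneg zv)]
    have hDval : ∑' zv : Fin (k + 1) → Z, g zv
        = ((k + 1 : ℕ) * ∑' z : Z, ENNReal.ofReal (p z * w z)).toReal := by
      rw [← hDenn, ← ENNReal.ofReal_tsum_of_nonneg hgnonneg hgsum,
        ENNReal.toReal_ofReal (tsum_nonneg hgnonneg)]
    have hDpos : 0 < ∑' zv : Fin (k + 1) → Z, g zv := by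
      rw [hDval]
      apply ENNReal.toReal_pos
      · intro h
        rw [mul_eq_zero] at h
        rcases h with h | h
        · exact Nat.cast_ne_zero.mpr (Nat.succ_ne_zero k) h
        · exact hEpos.ne' h
      · exact ENNReal.mul_ne_top (ENNReal.natCast_ne_top _) hfin
    -- numerator = R * denominator pointwise
    have hnum : ∀ zv : Fin (k + 1) → Z,
        -((∏ i, p (zv i)) * Real.log (∏ i, p (zv i))) = R * g zv := by
      intro zv
      rw [Real.log_prod (fun i _ => (hppos (zv i)).ne')]
      have : ∑ i, Real.log (p (zv i)) = -R * ∑ i, w (zv i) := by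
        rw [Finset.mul_sum]
        exact Finset.sum_congr rfl fun i _ => by rw [hlog]; ring
      rw [this, hg]
      ring
    calc (∑' zv : Fin (k + 1) → Z, -((∏ i, p (zv i)) * Real.log (∏ i, p (zv i)))) /
        (∑' zv : Fin (k + 1) → Z, g zv)
        = (∑' zv : Fin (k + 1) → Z, R * g zv) / (∑' zv : Fin (k + 1) → Z, g zv) := by
          rw [tsum_congr hnum]
      _ = R * (∑' zv : Fin (k + 1) → Z, g zv) / (∑' zv : Fin (k + 1) → Z, g zv) := by
          rw [tsum_mul_left]
      _ = R := by
          rw [mul_div_assoc, div_self hDpos.ne', mul_one]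
  calc limsup (fun k : ℕ =>
        (∑' zv : Fin (k + 1) → Z, -((∏ i, p (zv i)) * Real.log (∏ i, p (zv i)))) /
        (∑' zv : Fin (k + 1) → Z, (∏ i, p (zv i)) * ∑ i, w (zv i))) atTop
      = limsup (fun _ : ℕ => R) atTop := by
        congr 1
        exact funext hconst
    _ = R := limsup_const R
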